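/- For every bounded linear operator A on a complex Hilbert space H, w(A)^2 ≤ (1/4)·w(|A| + i|A*|)^2 + (1/8)·‖|A|² + |A*|²‖ + (1/4)·w(|A||A*|), where w denotes the numerical radius, |A| = (A*A)^{1/2}, and |A*| = (AA*)^{1/2}. -/

import Mathlib

open scoped NNReal
open Polynomial


open scoped InnerProductSpace

variable {H : Type*} [NormedAddCommGroup H] [InnerProductSpace ℂ H] [CompleteSpace H]

/-- The numerical radius of a bounded linear operator. -/
noncomputable def numRad (A : H →L[ℂ] H) : ℝ :=
  sSup {r : ℝ | ∃ x : H, ‖x‖ = 1 ∧ r = ‖⟪A x, x⟫_ℂ‖}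

/-- The absolute value `|A| = (A*A)^(1/2)` of a bounded linear operator. -/
noncomputable def oabs (A : H →L[ℂ] H) : H →L[ℂ] H :=
  CFC.sqrt (ContinuousLinearMap.adjoint A * A)

/-- The spectral radius (as a real number). -/
noncomputable def specRad (A : H →L[ℂ] H) : ℝ := (spectralRadius ℂ A).toReal

private lemma pow_intertwine (A : H →L[ℂ] H) (n : ℕ) :
    A * (star A * A) ^ n = (A * star A) ^ n * A := by
  induction n with
  | zero => simp
  | succ n ih =>
    rw [pow_succ, ← mul_assoc, ih, pow_succ]
    simp only [mul_assoc]

private lemma poly_intertwine (A : H →L[ℂ] H) (p : ℝ[X]) :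
    A * Polynomial.aeval (star A * A) p = Polynomial.aeval (A * star A) p * A := by
  induction p using Polynomial.induction_on with
  | C r =>
    simp only [Polynomial.aeval_C]
    rw [Algebra.algebraMap_eq_smul_one, smul_mul_assoc, one_mul, mul_smul_comm, mul_one]
  | add p q hp hq => simp only [map_add, mul_add, add_mul, hp, hq]
  | monomial n r _ =>
    simp only [map_mul, map_pow, Polynomial.aeval_C, Polynomial.aeval_X]
    rw [Algebra.algebraMap_eq_smul_one, smul_mul_assoc, one_mul, mul_smul_comm,
      smul_mul_assoc, smul_mul_assoc, pow_intertwine, one_mul]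

set_option maxHeartbeats 1000000 in
set_option synthInstance.maxHeartbeats 400000 in

set_option maxHeartbeats 1000000 in
set_option synthInstance.maxHeartbeats 400000 in
private lemma cfc_intertwine [Nontrivial H] (A : H →L[ℂ] H) (f : ℝ → ℝ) (hf : Continuous f) :
    A * cfc f (star A * A) = cfc f (A * star A) * A := by
  set T := star A * A with hTdef
  set T' := A * star A with hT'def
  have hT : (0:H →L[ℂ] H) ≤ T := star_mul_self_nonneg A
  have hT' : (0:H →L[ℂ] H) ≤ T' := mul_star_self_nonneg A
  have hTs : IsSelfAdjoint T := .of_nonneg hT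
  have hT's : IsSelfAdjoint T' := .of_nonneg hT'
  set M := max ‖T‖ ‖T'‖ with hM
  have hspecT : spectrum ℝ T ⊆ Set.Icc 0 M := fun x hx =>
    ⟨spectrum_nonneg_of_nonneg hT hx,
      le_trans (le_trans (le_abs_self x) (spectrum.norm_le_norm_of_mem hx)) (le_max_left _ _)⟩
  have hspecT' : spectrum ℝ T' ⊆ Set.Icc 0 M := fun x hx =>
    ⟨spectrum_nonneg_of_nonneg hT' hx,
      le_trans (le_trans (le_abs_self x) (spectrum.norm_le_norm_of_mem hx)) (le_max_right _ _)⟩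
  rw [← sub_eq_zero, ← norm_eq_zero]
  refine le_antisymm (le_of_forall_pos_le_add fun ε hε => ?_) (norm_nonneg _)
  rw [zero_add]
  have hδ : 0 < ε / (2 * ‖A‖ + 1) := by positivity
  obtain ⟨p, hp⟩ := exists_polynomial_near_of_continuousOn 0 M f hf.continuousOn _ hδ
  set g : ℝ → ℝ := fun x => f x - p.eval x with hg
  have hgc : Continuous g := hf.sub p.continuous
  have hfg : f = fun x => p.eval x + g x := by funext x; simp [hg]
  have hsplit : ∀ (S : H →L[ℂ] H), IsSelfAdjoint S → cfc f S = cfc p.eval S + cfc g S := by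
    intro S hS
    conv_lhs => rw [hfg]
    exact cfc_add S _ _ (p.continuous.continuousOn) hgc.continuousOn
  have hkey : A * cfc p.eval T = cfc p.eval T' * A := by
    rw [cfc_polynomial p T, cfc_polynomial p T']
    exact poly_intertwine A p
  have hgT : ‖cfc g T‖ ≤ ε / (2 * ‖A‖ + 1) := by
    refine norm_cfc_le hδ.le fun x hx => ?_
    rw [Real.norm_eq_abs, hg, abs_sub_comm]
    exact (hp x (hspecT hx)).le
  have hgT' : ‖cfc g T'‖ ≤ ε / (2 * ‖A‖ + 1) := by
    refine norm_cfc_le hδ.le fun x hx => ?_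
    rw [Real.norm_eq_abs, hg, abs_sub_comm]
    exact (hp x (hspecT' hx)).le
  calc ‖A * cfc f T - cfc f T' * A‖
      = ‖A * cfc g T - cfc g T' * A‖ := by
        rw [hsplit T hTs, hsplit T' hT's, mul_add, add_mul, hkey]; congr 1; abel
    _ ≤ ‖A * cfc g T‖ + ‖cfc g T' * A‖ := norm_sub_le _ _
    _ ≤ ‖A‖ * ‖cfc g T‖ + ‖cfc g T'‖ * ‖A‖ := by
        gcongr <;> first | exact norm_mul_le _ _
    _ ≤ ‖A‖ * (ε / (2 * ‖A‖ + 1)) + (ε / (2 * ‖A‖ + 1)) * ‖A‖ := by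
        gcongr <;> positivity
    _ = 2 * ‖A‖ * ε / (2 * ‖A‖ + 1) := by ring
    _ ≤ ε := by
        rw [div_le_iff₀ (by positivity)]
        nlinarith [norm_nonneg A, hε.le]

set_option synthInstance.maxHeartbeats 1000000 in
set_option maxHeartbeats 1000000 in
private lemma oabs_eq_cfc' (A : H →L[ℂ] H) :
    oabs A = cfc Real.sqrt (star A * A) := by
  rw [oabs, ← ContinuousLinearMap.star_eq_adjoint]
  have hT : (0:H →L[ℂ] H) ≤ star A * A := star_mul_self_nonneg A
  rw [CFC.sqrt_eq_cfc, cfc_nnreal_eq_real _ _ hT]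
  apply cfc_congr
  intro x hx
  have h0 : 0 ≤ x := spectrum_nonneg_of_nonneg hT hx
  simp [Real.coe_sqrt, Real.coe_toNNReal _ h0]

private lemma re_inner_nonneg' {T : H →L[ℂ] H} (h : 0 ≤ T) (x : H) :
    0 ≤ (⟪T x, x⟫_ℂ).re := by
  rw [ContinuousLinearMap.nonneg_iff_isPositive] at h
  exact (Complex.nonneg_iff.mp (h.inner_nonneg_left x)).1

private lemma re_inner_le' {S T : H →L[ℂ] H} (h : S ≤ T) (x : H) :
    (⟪S x, x⟫_ℂ).re ≤ (⟪T x, x⟫_ℂ).re := by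
  rw [ContinuousLinearMap.le_def] at h
  have := h.inner_nonneg_left x
  simp only [ContinuousLinearMap.sub_apply, inner_sub_left, map_sub] at this
  have h2 : RCLike.re ⟪S x, x⟫_ℂ ≤ RCLike.re ⟪T x, x⟫_ℂ := by
    have := (Complex.nonneg_iff.mp this).1; rw [Complex.sub_re] at this; exact sub_nonneg.mp this
  exact h2

set_option maxHeartbeats 2000000 in
set_option synthInstance.maxHeartbeats 1000000 in
private theorem mixed_schwarz' [Nontrivial H] (A : H →L[ℂ] H) (x : H) (hx : ‖x‖ = 1) :
    ‖⟪A x, x⟫_ℂ‖ ^ 2 ≤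
      (⟪cfc Real.sqrt (star A * A) x, x⟫_ℂ).re * (⟪cfc Real.sqrt (A * star A) x, x⟫_ℂ).re := by
  set T := star A * A with hTdef
  set T' := A * star A with hT'def
  have hT : (0:H →L[ℂ] H) ≤ T := star_mul_self_nonneg A
  have hT' : (0:H →L[ℂ] H) ≤ T' := mul_star_self_nonneg A
  have hTs : IsSelfAdjoint T := .of_nonneg hT
  have hT's : IsSelfAdjoint T' := .of_nonneg hT'
  set a := (⟪cfc Real.sqrt T x, x⟫_ℂ).re with ha
  set b := (⟪cfc Real.sqrt T' x, x⟫_ℂ).re with hb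
  have hann : 0 ≤ a := re_inner_nonneg' (cfc_nonneg fun t _ => Real.sqrt_nonneg t) x
  have hbnn : 0 ≤ b := re_inner_nonneg' (cfc_nonneg fun t _ => Real.sqrt_nonneg t) x
  -- reduce to: ∀ ε > 0, ‖⟪A x, x⟫‖ ^ 2 ≤ (a + ε) * b
  suffices key : ∀ ε : ℝ, 0 < ε → ‖⟪A x, x⟫_ℂ‖ ^ 2 ≤ (a + ε) * b by
    refine le_of_forall_pos_le_add fun ε hε => ?_
    have hδ : 0 < ε / (b + 1) := by positivity
    have := key _ hδ
    have hb1 : (ε / (b + 1)) * b ≤ ε := by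
      rw [div_mul_eq_mul_div, div_le_iff₀ (by positivity)]
      nlinarith
    nlinarith
  intro ε hε
  -- the regularized functions
  set g : ℝ → ℝ := fun t => (Real.sqrt t + ε)⁻¹ with hg
  set s : ℝ → ℝ := fun t => Real.sqrt t + ε with hs
  set h : ℝ → ℝ := fun t => Real.sqrt (Real.sqrt t + ε) with hh
  have hspos : ∀ t, 0 < s t := fun t => by
    have := Real.sqrt_nonneg t; simp only [hs]; linarith
  have hgc : Continuous g := by
    exact (Real.continuous_sqrt.add continuous_const).inv₀ fun t => (hspos t).ne'
  have hsc : Continuous s := Real.continuous_sqrt.add continuous_const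
  have hhc : Continuous h := Real.continuous_sqrt.comp hsc
  set B := cfc g T with hB
  set Cop := cfc h T with hC
  have hCsa : IsSelfAdjoint Cop := cfc_predicate _ T
  -- identities
  have idBs : B * cfc s T = 1 := by
    rw [hB, ← cfc_mul g s T hgc.continuousOn hsc.continuousOn]
    calc cfc (fun t => g t * s t) T = cfc (fun _ : ℝ => (1:ℝ)) T := by
          apply cfc_congr; intro t _
          have h2 : s t ≠ 0 := (hspos t).ne'
          have h3 : g t = (s t)⁻¹ := rfl
          simp only [h3]
          first
          | exact inv_mul_cancel₀ h2
          | exact mul_inv_cancel₀ h2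
      _ = 1 := cfc_const_one ℝ T
  have idCsq : Cop * Cop = cfc s T := by
    rw [hC, ← cfc_mul h h T hhc.continuousOn hhc.continuousOn]
    apply cfc_congr; intro t _
    exact Real.mul_self_sqrt (hspos t).le
  have idBsB : B * (cfc s T * B) = B := by
    rw [hB, ← cfc_mul s g T hsc.continuousOn hgc.continuousOn,
      ← cfc_mul g (fun x => s x * g x) T hgc.continuousOn (hsc.mul hgc).continuousOn]
    apply cfc_congr; intro t _
    have h2 : s t ≠ 0 := (hspos t).ne'
    have h3 : g t = (s t)⁻¹ := rfl
    simp only [h3]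
    field_simp
  have hAfact : A = (A * B) * cfc s T := by
    rw [mul_assoc, idBs, mul_one]
  -- the intertwined positive operator
  have hABsA : (A * B) * cfc s T * star (A * B) = cfc (fun t => g t * t) T' := by
    have h1 : star (A * B) = B * star A := by
      rw [star_mul]
      congr 1
      exact (cfc_predicate g T).star_eq
    have h2 : A * B * cfc s T * (B * star A) = A * (B * (cfc s T * B)) * star A := by
      simp only [mul_assoc]
    rw [h1, h2, idBsB, hB, cfc_intertwine A g hgc, mul_assoc, ← hT'def]
    calc cfc g T' * T' = cfc g T' * cfc (fun t : ℝ => t) T' := by rw [cfc_id' ℝ T']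
      _ = cfc (fun t => g t * t) T' := by
          rw [← cfc_mul g (fun t : ℝ => t) T' hgc.continuousOn continuous_id.continuousOn]
  have hEle : cfc (fun t => g t * t) T' ≤ cfc Real.sqrt T' := by
    refine cfc_mono (fun t ht => ?_) ((hgc.mul continuous_id).continuousOn)
      Real.continuous_sqrt.continuousOn
    have h0 : 0 ≤ t := spectrum_nonneg_of_nonneg hT' ht
    have h1 : Real.sqrt t * Real.sqrt t = t := Real.mul_self_sqrt h0
    have h2 := Real.sqrt_nonneg t
    rw [hg]
    rw [inv_mul_le_iff₀ (hspos t)]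
    have h3 : s t = Real.sqrt t + ε := rfl
    nlinarith
  -- now the Cauchy-Schwarz computation
  set y := ContinuousLinearMap.adjoint (A * B) x with hy
  have e1 : ⟪A x, x⟫_ℂ = ⟪Cop x, Cop y⟫_ℂ := by
    conv_lhs => rw [hAfact]
    rw [ContinuousLinearMap.mul_apply, ← ContinuousLinearMap.adjoint_inner_right (A * B),
      ← hy, ← idCsq, ContinuousLinearMap.mul_apply]
    rw [← ContinuousLinearMap.adjoint_inner_left Cop, hCsa.adjoint_eq]
  have e2 : ‖Cop x‖ ^ 2 = a + ε := by
    rw [← inner_self_eq_norm_sq (𝕜 := ℂ) (Cop x)]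
    have : ⟪Cop x, Cop x⟫_ℂ = ⟪(cfc s T) x, x⟫_ℂ := by
      rw [← idCsq, ContinuousLinearMap.mul_apply,
        ← ContinuousLinearMap.adjoint_inner_left Cop, hCsa.adjoint_eq]
    rw [show RCLike.re ⟪Cop x, Cop x⟫_ℂ = (⟪Cop x, Cop x⟫_ℂ).re from rfl, this]
    have hsplit : cfc s T = cfc Real.sqrt T + cfc (fun _ : ℝ => ε) T :=
      cfc_add T _ _ Real.continuous_sqrt.continuousOn continuous_const.continuousOn
    rw [hsplit, cfc_const ε T, ContinuousLinearMap.add_apply, inner_add_left, Complex.add_re,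
      ha, Algebra.algebraMap_eq_smul_one, ContinuousLinearMap.smul_apply,
      ContinuousLinearMap.one_apply]
    have hxx : ⟪x, x⟫_ℂ = (1:ℂ) := by
      rw [inner_self_eq_norm_sq_to_K, hx]; norm_num
    have hre : (⟪ε • x, x⟫_ℂ).re = ε := by
      rw [RCLike.real_smul_eq_coe_smul (K := ℂ), inner_smul_left, hxx]
      simp
    rw [hre]
  have e3 : ‖Cop y‖ ^ 2 ≤ b := by
    rw [← inner_self_eq_norm_sq (𝕜 := ℂ) (Cop y)]
    have h4 : ⟪Cop y, Cop y⟫_ℂ = ⟪(cfc s T) y, y⟫_ℂ := by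
      rw [← idCsq, ContinuousLinearMap.mul_apply,
        ← ContinuousLinearMap.adjoint_inner_left Cop, hCsa.adjoint_eq]
    have h5 : (A * B * cfc s T * star (A * B)) x
        = (A * B) ((cfc s T) ((ContinuousLinearMap.adjoint (A * B)) x)) := by
      rw [ContinuousLinearMap.star_eq_adjoint]
      simp [ContinuousLinearMap.mul_apply]
    have h6 : ⟪Cop y, Cop y⟫_ℂ = ⟪(A * B * cfc s T * star (A * B)) x, x⟫_ℂ := by
      rw [h4, hy, ContinuousLinearMap.adjoint_inner_right (A * B), h5]
    rw [show RCLike.re ⟪Cop y, Cop y⟫_ℂ = (⟪Cop y, Cop y⟫_ℂ).re from rfl, h6, hABsA]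
    exact re_inner_le' hEle x
  calc ‖⟪A x, x⟫_ℂ‖ ^ 2 = ‖⟪Cop x, Cop y⟫_ℂ‖ ^ 2 := by rw [e1]
    _ ≤ (‖Cop x‖ * ‖Cop y‖) ^ 2 := by
        have := norm_inner_le_norm (𝕜 := ℂ) (Cop x) (Cop y)
        have h0 : 0 ≤ ‖⟪Cop x, Cop y⟫_ℂ‖ := norm_nonneg _
        nlinarith
    _ = ‖Cop x‖ ^ 2 * ‖Cop y‖ ^ 2 := by ring
    _ ≤ (a + ε) * b := by
        rw [e2]
        have := sq_nonneg ‖Cop y‖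
        have hae : 0 ≤ a + ε := by linarith
        nlinarith [e3]

private lemma numRad_bddAbove (A : H →L[ℂ] H) :
    BddAbove {r : ℝ | ∃ x : H, ‖x‖ = 1 ∧ r = ‖⟪A x, x⟫_ℂ‖} := by
  refine ⟨‖A‖, ?_⟩
  rintro r ⟨x, hx, rfl⟩
  calc ‖⟪A x, x⟫_ℂ‖ ≤ ‖A x‖ * ‖x‖ := norm_inner_le_norm _ _
    _ ≤ ‖A‖ * ‖x‖ * ‖x‖ := by gcongr; exact A.le_opNorm x
    _ = ‖A‖ := by rw [hx]; ring

private lemma norm_inner_le_numRad (A : H →L[ℂ] H) {x : H} (hx : ‖x‖ = 1) :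
    ‖⟪A x, x⟫_ℂ‖ ≤ numRad A :=
  le_csSup (numRad_bddAbove A) ⟨x, hx, rfl⟩

private lemma numRad_nonneg (A : H →L[ℂ] H) : 0 ≤ numRad A :=
  Real.sSup_nonneg (by rintro r ⟨x, hx, rfl⟩; positivity)

private lemma oabs_adj_eq_cfc (A : H →L[ℂ] H) :
    oabs (ContinuousLinearMap.adjoint A) = cfc Real.sqrt (A * star A) := by
  rw [oabs_eq_cfc', ← ContinuousLinearMap.star_eq_adjoint, star_star]

private lemma oabs_nonneg (A : H →L[ℂ] H) : (0 : H →L[ℂ] H) ≤ oabs A := by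
  rw [oabs_eq_cfc']
  exact cfc_nonneg fun t _ => Real.sqrt_nonneg t

set_option maxHeartbeats 1000000 in
set_option synthInstance.maxHeartbeats 400000 in

set_option maxHeartbeats 1000000 in
set_option synthInstance.maxHeartbeats 400000 in
private theorem pointwise [Nontrivial H] (A : H →L[ℂ] H) (x : H) (hx : ‖x‖ = 1) :
    ‖⟪A x, x⟫_ℂ‖ ^ 2 ≤
      (1 / 4) * numRad (oabs A + Complex.I • oabs (ContinuousLinearMap.adjoint A)) ^ 2
        + (1 / 8) * ‖oabs A ^ 2 + oabs (ContinuousLinearMap.adjoint A) ^ 2‖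
        + (1 / 4) * numRad (oabs A * oabs (ContinuousLinearMap.adjoint A)) := by
  set B := oabs A with hBdef
  set C := oabs (ContinuousLinearMap.adjoint A) with hCdef
  have hBnn : (0 : H →L[ℂ] H) ≤ B := oabs_nonneg A
  have hCnn : (0 : H →L[ℂ] H) ≤ C := oabs_nonneg _
  have hBsa : IsSelfAdjoint B := .of_nonneg hBnn
  have hCsa : IsSelfAdjoint C := .of_nonneg hCnn
  set a := (⟪B x, x⟫_ℂ).re with ha
  set b := (⟪C x, x⟫_ℂ).re with hb
  have hann : 0 ≤ a := re_inner_nonneg' hBnn x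
  have hbnn : 0 ≤ b := re_inner_nonneg' hCnn x
  -- mixed Schwarz
  have h1 : ‖⟪A x, x⟫_ℂ‖ ^ 2 ≤ a * b := by
    have := mixed_schwarz' A x hx
    rwa [← oabs_eq_cfc' A, ← oabs_adj_eq_cfc A, ← hBdef, ← hCdef, ← ha, ← hb] at this
  -- selfadjoint inner products are real
  have hBreal : ⟪B x, x⟫_ℂ = (a : ℂ) :=
    (((ContinuousLinearMap.isPositive_iff_complex B).mp
      ((ContinuousLinearMap.nonneg_iff_isPositive B).mp hBnn) x).1).symm
  have hCreal : ⟪C x, x⟫_ℂ = (b : ℂ) :=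
    (((ContinuousLinearMap.isPositive_iff_complex C).mp
      ((ContinuousLinearMap.nonneg_iff_isPositive C).mp hCnn) x).1).symm
  -- the first numerical radius bound : a² + b² ≤ numRad (B + I • C)²
  have h2 : a ^ 2 + b ^ 2 ≤ numRad (B + Complex.I • C) ^ 2 := by
    have hz : ⟪(B + Complex.I • C) x, x⟫_ℂ = (a : ℂ) - Complex.I * (b : ℂ) := by
      rw [ContinuousLinearMap.add_apply, inner_add_left, hBreal,
        ContinuousLinearMap.smul_apply, inner_smul_left, hCreal]
      simp [Complex.ext_iff]
    have hn : ‖⟪(B + Complex.I • C) x, x⟫_ℂ‖ ^ 2 = a ^ 2 + b ^ 2 := by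
      rw [hz]
      rw [Complex.sq_norm, Complex.normSq_apply]
      simp [Complex.ext_iff]
      ring
    rw [← hn]
    have hle := norm_inner_le_numRad (B + Complex.I • C) hx
    have h0 : 0 ≤ ‖⟪(B + Complex.I • C) x, x⟫_ℂ‖ := norm_nonneg _
    nlinarith
  -- the second bound : (a+b)² ≤ ‖B² + C²‖ + 2 numRad (B*C)
  have h3 : (a + b) ^ 2 ≤ ‖B ^ 2 + C ^ 2‖ + 2 * numRad (B * C) := by
    set R := B + C with hR
    have hRsa : IsSelfAdjoint R := hBsa.add hCsa
    have hs : a + b = (⟪R x, x⟫_ℂ).re := by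
      rw [hR, ContinuousLinearMap.add_apply, inner_add_left, Complex.add_re]
    have hstep1 : (a + b) ^ 2 ≤ ‖R x‖ ^ 2 := by
      rw [hs]
      have i1 : |(⟪R x, x⟫_ℂ).re| ≤ ‖⟪R x, x⟫_ℂ‖ := Complex.abs_re_le_norm _
      have i2 : ‖⟪R x, x⟫_ℂ‖ ≤ ‖R x‖ * ‖x‖ := norm_inner_le_norm _ _
      rw [hx, mul_one] at i2
      have i3 : |(⟪R x, x⟫_ℂ).re| ≤ ‖R x‖ := le_trans i1 i2
      calc (⟪R x, x⟫_ℂ).re ^ 2 = |(⟪R x, x⟫_ℂ).re| ^ 2 := (sq_abs _).symm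
        _ ≤ ‖R x‖ ^ 2 := pow_le_pow_left₀ (abs_nonneg _) i3 2
    have hstep2 : ‖R x‖ ^ 2 = (⟪(R * R) x, x⟫_ℂ).re := by
      have : ⟪(R * R) x, x⟫_ℂ = ⟪R x, R x⟫_ℂ := by
        rw [ContinuousLinearMap.mul_apply, ← ContinuousLinearMap.adjoint_inner_left R,
          hRsa.adjoint_eq]
      rw [this]
      exact (inner_self_eq_norm_sq (𝕜 := ℂ) (R x)).symm
    have hexp : R * R = (B ^ 2 + C ^ 2) + (B * C) + (C * B) := by
      rw [hR]; noncomm_ring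
    have hCB : (⟪(C * B) x, x⟫_ℂ).re = (⟪(B * C) x, x⟫_ℂ).re := by
      have e1 : ⟪(C * B) x, x⟫_ℂ = ⟪B x, C x⟫_ℂ := by
        rw [ContinuousLinearMap.mul_apply, ← ContinuousLinearMap.adjoint_inner_left C,
          hCsa.adjoint_eq]
      have e2 : ⟪(B * C) x, x⟫_ℂ = ⟪C x, B x⟫_ℂ := by
        rw [ContinuousLinearMap.mul_apply, ← ContinuousLinearMap.adjoint_inner_left B,
          hBsa.adjoint_eq]
      rw [e1, e2, ← inner_conj_symm (B x) (C x), Complex.conj_re]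
    have hS : (⟪(B ^ 2 + C ^ 2) x, x⟫_ℂ).re ≤ ‖B ^ 2 + C ^ 2‖ := by
      have i1 : (⟪(B ^ 2 + C ^ 2) x, x⟫_ℂ).re ≤ ‖⟪(B ^ 2 + C ^ 2) x, x⟫_ℂ‖ :=
        Complex.re_le_norm _
      have i2 : ‖⟪(B ^ 2 + C ^ 2) x, x⟫_ℂ‖ ≤ ‖(B ^ 2 + C ^ 2) x‖ * ‖x‖ := norm_inner_le_norm _ _
      have i3 : ‖(B ^ 2 + C ^ 2) x‖ ≤ ‖B ^ 2 + C ^ 2‖ * ‖x‖ := (B ^ 2 + C ^ 2).le_opNorm x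
      rw [hx, mul_one] at i2 i3
      linarith
    have hP : (⟪(B * C) x, x⟫_ℂ).re ≤ numRad (B * C) := by
      have i1 : (⟪(B * C) x, x⟫_ℂ).re ≤ ‖⟪(B * C) x, x⟫_ℂ‖ := Complex.re_le_norm _
      exact le_trans i1 (norm_inner_le_numRad (B * C) hx)
    have hsum : (⟪(R * R) x, x⟫_ℂ).re
        = (⟪(B ^ 2 + C ^ 2) x, x⟫_ℂ).re + (⟪(B * C) x, x⟫_ℂ).re + (⟪(C * B) x, x⟫_ℂ).re := by
      rw [hexp]
      simp only [ContinuousLinearMap.add_apply, inner_add_left, Complex.add_re]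
    rw [hstep2] at hstep1
    rw [hsum, hCB] at hstep1
    linarith
  -- combine everything
  have hN1 : 0 ≤ numRad (B + Complex.I • C) := numRad_nonneg _
  nlinarith [h1, h2, h3, sq_nonneg (a - b), sq_nonneg (a + b), norm_nonneg (B ^ 2 + C ^ 2),
    numRad_nonneg (B * C)]

theorem stmt0 (A : H →L[ℂ] H) :
    numRad A ^ 2 ≤
      (1 / 4) * numRad (oabs A + Complex.I • oabs (ContinuousLinearMap.adjoint A)) ^ 2
        + (1 / 8) * ‖oabs A ^ 2 + oabs (ContinuousLinearMap.adjoint A) ^ 2‖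
        + (1 / 4) * numRad (oabs A * oabs (ContinuousLinearMap.adjoint A)) := by
  set W := (1 / 4) * numRad (oabs A + Complex.I • oabs (ContinuousLinearMap.adjoint A)) ^ 2
        + (1 / 8) * ‖oabs A ^ 2 + oabs (ContinuousLinearMap.adjoint A) ^ 2‖
        + (1 / 4) * numRad (oabs A * oabs (ContinuousLinearMap.adjoint A)) with hW
  have hWnn : 0 ≤ W := by
    have := numRad_nonneg (oabs A * oabs (ContinuousLinearMap.adjoint A))
    have := norm_nonneg (oabs A ^ 2 + oabs (ContinuousLinearMap.adjoint A) ^ 2)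
    have := sq_nonneg (numRad (oabs A + Complex.I • oabs (ContinuousLinearMap.adjoint A)))
    rw [hW]
    linarith
  by_cases hex : ∃ x : H, ‖x‖ = 1
  · obtain ⟨x₀, hx₀⟩ := hex
    have hnt : Nontrivial H :=
      ⟨⟨x₀, 0, fun h => by rw [h] at hx₀; simp at hx₀⟩⟩
    have hsup : numRad A ≤ Real.sqrt W := by
      refine Real.sSup_le ?_ (Real.sqrt_nonneg W)
      rintro r ⟨x, hx, rfl⟩
      have hp := pointwise A x hx
      rw [← hW] at hp
      rw [Real.le_sqrt (norm_nonneg _)]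
      · exact hp
      · exact hWnn
    calc numRad A ^ 2 ≤ Real.sqrt W ^ 2 := pow_le_pow_left₀ (numRad_nonneg A) hsup 2
      _ = W := Real.sq_sqrt hWnn
  · have hempty : {r : ℝ | ∃ x : H, ‖x‖ = 1 ∧ r = ‖⟪A x, x⟫_ℂ‖} = ∅ := by
      ext r
      simp only [Set.mem_setOf_eq, Set.mem_empty_iff_false, iff_false]
      rintro ⟨x, hx, -⟩
      exact hex ⟨x, hx⟩
    have h0 : numRad A = 0 := by rw [numRad, hempty, Real.sSup_empty]
    rw [h0]
    simpa using hWnn
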